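/- Let [a,b] be a segment with d = b - a + 1, and let the degenerate affine Hecke-Clifford algebra act on Φ_a ⊗ Cl_d as in the segment representation. Then for δ ∈ {0,1} and 1 ≤ i ≤ d, x_i²·(φ^δ ⊗ 𝟏) = q(a + i - 1)·(φ^δ ⊗ 𝟏), where q(n) = n(n+1). -/

import Mathlib

open CliffordAlgebra

/-- The quadratic form on `ℂ^d` with `Q(e_i) = -1`, whose Clifford algebra is `Cl(d)`. -/
noncomputable def Qd (d : ℕ) : QuadraticForm ℂ (Fin d → ℂ) :=
  QuadraticMap.weightedSumSquares ℂ (fun _ : Fin d => (-1 : ℂ))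

/-- The `j`-th Clifford generator `c_j` of `Cl(d)`. -/
noncomputable def cgen (d : ℕ) (j : Fin d) : CliffordAlgebra (Qd d) :=
  CliffordAlgebra.ι (Qd d) (Pi.single j (1 : ℂ))

/-- The underlying space `Φ_a ⊗ Cl_d` of the segment module: the pair `(u₀, u₁)`
represents `1 ⊗ u₀ + φ ⊗ u₁`, where `Cl_d = Cl(d)·𝟏` is the basic spin
representation (identified with `Cl(d)` itself) and `φ` generates `Φ_a` with
`φ² = a`. -/
noncomputable abbrev SegSpace (d : ℕ) := CliffordAlgebra (Qd d) × CliffordAlgebra (Qd d)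

/-- Action of `c_i = 1 ⊗ c_i` on `Φ_a ⊗ Cl_d` (with the Koszul sign on the odd
component `φ ⊗ u₁`). -/
noncomputable def Cop (d : ℕ) (i : ℕ) : Module.End ℂ (SegSpace d) :=
  if h : i < d then
    LinearMap.prodMap (LinearMap.mulLeft ℂ (cgen d ⟨i, h⟩))
      (-(LinearMap.mulLeft ℂ (cgen d ⟨i, h⟩)))
  else 0

/-- Action of the simple transposition `s_i = 1 ⊗ s_i` on `Φ_a ⊗ Cl_d`, where
`S_d` acts on `Cl_d = Cl(d)·𝟏` through the algebra automorphisms permuting the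
Clifford generators. -/
noncomputable def Sop (d : ℕ)
    (perm : Equiv.Perm (Fin d) → (CliffordAlgebra (Qd d) →ₐ[ℂ] CliffordAlgebra (Qd d)))
    (i : ℕ) : Module.End ℂ (SegSpace d) :=
  if h : i + 1 < d then
    LinearMap.prodMap
      (perm (Equiv.swap ⟨i, Nat.lt_of_succ_lt h⟩ ⟨i + 1, h⟩)).toLinearMap
      (perm (Equiv.swap ⟨i, Nat.lt_of_succ_lt h⟩ ⟨i + 1, h⟩)).toLinearMap
  else 0

/-- The diagonal part `a ε_i + Σ_{k<i} (1 - c_k c_i) s_{ki}` of the action of `x_i`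
on each of the two components of `Φ_a ⊗ Cl_d`. -/
noncomputable def Tdiag (d : ℕ) (a : ℤ)
    (perm : Equiv.Perm (Fin d) → (CliffordAlgebra (Qd d) →ₐ[ℂ] CliffordAlgebra (Qd d)))
    (eps : Fin d → (CliffordAlgebra (Qd d) →ₐ[ℂ] CliffordAlgebra (Qd d)))
    (i : ℕ) (h : i < d) : CliffordAlgebra (Qd d) →ₗ[ℂ] CliffordAlgebra (Qd d) :=
  (a : ℂ) • (eps ⟨i, h⟩).toLinearMap +
    ∑ k : Fin d,
      if (k : ℕ) < i then
        (perm (Equiv.swap k ⟨i, h⟩)).toLinearMap -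
          (LinearMap.mulLeft ℂ (cgen d k * cgen d ⟨i, h⟩)) ∘ₗ
            (perm (Equiv.swap k ⟨i, h⟩)).toLinearMap
      else 0

/-- Action of `x_i = a ⊗ ε_i + Σ_{k<i} 1 ⊗ (1 - c_k c_i) s_{ki} - φ ⊗ c_i` on
`Φ_a ⊗ Cl_d` (the last summand mixes the two components, using `φ² = a`). -/
noncomputable def Xop (d : ℕ) (a : ℤ)
    (perm : Equiv.Perm (Fin d) → (CliffordAlgebra (Qd d) →ₐ[ℂ] CliffordAlgebra (Qd d)))
    (eps : Fin d → (CliffordAlgebra (Qd d) →ₐ[ℂ] CliffordAlgebra (Qd d)))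
    (i : ℕ) : Module.End ℂ (SegSpace d) :=
  if h : i < d then
    LinearMap.prodMap (Tdiag d a perm eps i h) (Tdiag d a perm eps i h) +
      LinearMap.prod
        ((a : ℂ) • ((LinearMap.mulLeft ℂ (cgen d ⟨i, h⟩)) ∘ₗ
          LinearMap.snd ℂ (CliffordAlgebra (Qd d)) (CliffordAlgebra (Qd d))))
        (-((LinearMap.mulLeft ℂ (cgen d ⟨i, h⟩)) ∘ₗ
          LinearMap.fst ℂ (CliffordAlgebra (Qd d)) (CliffordAlgebra (Qd d))))
  else 0

-- ## auxiliary generic lemmas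

lemma aux_xzx {R : Type*} [Ring R] {x z : R} (hx : x*x = -1) (hxz : x*z = -(z*x)) :
    x*(z*x) = z := by
  rw [← mul_assoc, hxz, neg_mul, mul_assoc, hx, mul_neg_one, neg_neg]

lemma aux_xyyx {R : Type*} [Ring R] {x y : R} (hx : x*x = -1) (hy : y*y = -1) :
    x*y*(y*x) = 1 := by
  rw [mul_assoc x y, ← mul_assoc y y, hy, neg_one_mul, mul_neg, hx, neg_neg]

lemma aux_xyzx {R : Type*} [Ring R] {x y z : R} (hx : x*x = -1)
    (hxy : x*y = -(y*x)) (hxz : x*z = -(z*x)) (hyz : y*z = -(z*y)) :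
    x*y*(z*x) = z*y := by
  have h1 : x*(y*x) = y := aux_xzx hx hxy
  calc x*y*(z*x) = x*((y*z)*x) := by rw [mul_assoc, ← mul_assoc y z x]
  _ = x*((-(z*y))*x) := by rw [hyz]
  _ = -(x*(z*(y*x))) := by rw [neg_mul, mul_neg, mul_assoc]
  _ = -(-(z*(x*(y*x)))) := by rw [← mul_assoc x z, hxz, neg_mul, mul_assoc]
  _ = z*(x*(y*x)) := neg_neg _
  _ = z*y := by rw [h1]

lemma card_lt (d i : ℕ) (hi : i ≤ d) :
    (Finset.univ.filter (fun k : Fin d => (k:ℕ) < i)).card = i := by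
  have h := Finset.card_bij (s := Finset.univ.filter (fun k : Fin d => (k:ℕ) < i))
    (t := (Finset.univ : Finset (Fin i)))
    (fun (k : Fin d) hk => (⟨k, (Finset.mem_filter.mp hk).2⟩ : Fin i))
    (fun _ _ => Finset.mem_univ _)
    (fun a ha b hb h => by simpa [Fin.ext_iff] using congrArg Fin.val h)
    (fun b _ => ⟨⟨b, lt_of_lt_of_le b.2 hi⟩, Finset.mem_filter.mpr ⟨Finset.mem_univ _, b.2⟩, rfl⟩)
  simpa using h

lemma sum_ite_lt {M : Type*} [AddCommMonoid M] (d i : ℕ) (hi : i ≤ d) (x : M) :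
    (∑ k : Fin d, if (k:ℕ) < i then x else 0) = i • x := by
  rw [← Finset.sum_filter, Finset.sum_const, card_lt d i hi]

-- ## Clifford generator relations

lemma Qd_single (d : ℕ) (j : Fin d) : Qd d (Pi.single j (1:ℂ)) = -1 := by
  simp [Qd, QuadraticMap.weightedSumSquares_apply, Pi.single_apply]

lemma csq (d : ℕ) (j : Fin d) : cgen d j * cgen d j = -1 := by
  rw [cgen, ι_sq_scalar, Qd_single]; simp

lemma canti (d : ℕ) {j k : Fin d} (h : j ≠ k) :
    cgen d j * cgen d k = -(cgen d k * cgen d j) := by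
  have hpol : QuadraticMap.polar (Qd d) (Pi.single j (1:ℂ)) (Pi.single k (1:ℂ)) = 0 := by
    rw [QuadraticMap.polar]
    simp only [Qd, QuadraticMap.weightedSumSquares_apply, Pi.add_apply, Pi.single_apply,
      smul_eq_mul, neg_mul, one_mul]
    rw [Finset.sum_congr rfl (g := fun m =>
      (-(if m = j then (1:ℂ) else 0)) + (-(if m = k then (1:ℂ) else 0)))
      (fun m _ => by
        by_cases h1 : m = j <;> by_cases h2 : m = k <;> simp_all)]
    simp [Finset.sum_add_distrib]
  have h2 := ι_mul_ι_add_swap (Q := Qd d) (Pi.single j (1:ℂ)) (Pi.single k (1:ℂ))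
  rw [hpol, map_zero] at h2
  rw [cgen, cgen]
  exact eq_neg_of_add_eq_zero_left h2

-- ## computations of Tdiag on various elements

section
variable (d : ℕ) (a : ℤ)
  (perm : Equiv.Perm (Fin d) → (CliffordAlgebra (Qd d) →ₐ[ℂ] CliffordAlgebra (Qd d)))
  (eps : Fin d → (CliffordAlgebra (Qd d) →ₐ[ℂ] CliffordAlgebra (Qd d)))
  (i : ℕ) (hi : i < d)

lemma Tapp (x : CliffordAlgebra (Qd d)) : Tdiag d a perm eps i hi x =
    (a:ℂ) • eps ⟨i,hi⟩ x + ∑ k : Fin d, (if (k:ℕ) < i then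
      (perm (Equiv.swap k ⟨i,hi⟩) x -
        cgen d k * cgen d ⟨i,hi⟩ * (perm (Equiv.swap k ⟨i,hi⟩) x)) else 0) := by
  simp only [Tdiag, LinearMap.add_apply, LinearMap.smul_apply, LinearMap.sum_apply,
    AlgHom.toLinearMap_apply]
  congr 1
  refine Finset.sum_congr rfl fun k _ => ?_
  split_ifs with h
  · simp only [LinearMap.sub_apply, LinearMap.comp_apply, LinearMap.mulLeft_apply,
      AlgHom.toLinearMap_apply, mul_assoc]
  · rfl

lemma T_one : Tdiag d a perm eps i hi 1 = ((a:ℂ)+(i:ℕ)) • 1 -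
    (∑ k : Fin d, if (k:ℕ) < i then cgen d k * cgen d ⟨i,hi⟩ else 0) := by
  rw [Tapp, map_one]
  have hσ : ∀ σ : Equiv.Perm (Fin d), perm σ (1 : CliffordAlgebra (Qd d)) = 1 :=
    fun σ => map_one _
  simp only [hσ, mul_one]
  rw [Finset.sum_congr rfl (g := fun (k : Fin d) =>
      (if (k:ℕ) < i then (1:CliffordAlgebra (Qd d)) else 0) -
      (if (k:ℕ) < i then cgen d k * cgen d ⟨i,hi⟩ else 0))
    (fun k _ => by by_cases h : (k:ℕ) < i <;> simp [h])]
  rw [Finset.sum_sub_distrib, sum_ite_lt d i hi.le]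
  simp only [← Nat.cast_smul_eq_nsmul ℂ]
  module

lemma fin_ne_of_lt {k : Fin d} (hk : (k:ℕ) < i) : k ≠ ⟨i, hi⟩ :=
  fun h => by rw [h] at hk; exact absurd hk (lt_irrefl i)

lemma ciS : cgen d ⟨i,hi⟩ * (∑ k : Fin d, if (k:ℕ) < i then cgen d k * cgen d ⟨i,hi⟩ else 0) =
    (∑ k : Fin d, if (k:ℕ) < i then cgen d k else 0) := by
  rw [Finset.mul_sum]
  refine Finset.sum_congr rfl fun k _ => ?_
  rw [mul_ite, mul_zero]
  by_cases hk : (k:ℕ) < i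
  · rw [if_pos hk, if_pos hk,
      aux_xzx (csq d ⟨i,hi⟩) (canti d (Ne.symm (fin_ne_of_lt d i hi hk)))]
  · rw [if_neg hk, if_neg hk]

lemma Sc_sq (hid : i ≤ d) : (∑ k : Fin d, if (k:ℕ) < i then cgen d k else 0) *
    (∑ k : Fin d, if (k:ℕ) < i then cgen d k else 0) =
    -(((i:ℕ):ℂ) • (1 : CliffordAlgebra (Qd d))) := by
  set Sc := ∑ k : Fin d, if (k:ℕ) < i then cgen d k else 0 with hSc
  have expand : Sc * Sc = ∑ m : Fin d, ∑ k : Fin d,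
      (if (m:ℕ) < i then (if (k:ℕ) < i then cgen d m * cgen d k else 0) else 0) := by
    rw [hSc, Finset.sum_mul]
    refine Finset.sum_congr rfl fun m _ => ?_
    by_cases hm : (m:ℕ) < i <;>
      simp [hm, Finset.mul_sum, mul_ite, mul_zero]
  have hdouble : Sc * Sc + Sc * Sc = (i : ℕ) • (-2 : CliffordAlgebra (Qd d)) := by
    have comm := Finset.sum_comm (s := (Finset.univ : Finset (Fin d)))
      (t := (Finset.univ : Finset (Fin d)))
      (f := fun (m k : Fin d) =>
        (if (m:ℕ) < i then (if (k:ℕ) < i then cgen d m * cgen d k else 0) else 0))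
    rw [expand]
    nth_rewrite 2 [comm]
    rw [← Finset.sum_add_distrib]
    rw [Finset.sum_congr rfl (g := fun (m : Fin d) =>
        (if (m:ℕ) < i then (-2 : CliffordAlgebra (Qd d)) else 0)) (fun m _ => ?_)]
    · exact sum_ite_lt d i hid _
    · rw [← Finset.sum_add_distrib]
      rw [Finset.sum_congr rfl (g := fun (k : Fin d) =>
          (if k = m then (if (m:ℕ) < i then (-2 : CliffordAlgebra (Qd d)) else 0) else 0))
        (fun k _ => ?_)]
      · rw [Fintype.sum_ite_eq' m (fun _ =>
          (if (m:ℕ) < i then (-2 : CliffordAlgebra (Qd d)) else 0))]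
      · by_cases hkm : k = m
        · subst hkm
          by_cases hk : (k:ℕ) < i
          · simp only [hk, if_true, if_pos rfl, csq]; norm_num
          · simp [hk]
        · by_cases hm : (m:ℕ) < i <;> by_cases hk : (k:ℕ) < i <;>
            simp [hkm, hm, hk, canti d (Ne.symm hkm)]
  have hneg2 : ((-2:ℂ)) • (1 : CliffordAlgebra (Qd d)) = -2 := by
    rw [← Algebra.algebraMap_eq_smul_one, map_neg, map_ofNat]
  have key : (2:ℂ) • (Sc * Sc) = (2:ℂ) • (-(((i:ℕ):ℂ) • (1 : CliffordAlgebra (Qd d)))) := by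
    rw [two_smul, hdouble, ← hneg2, ← Nat.cast_smul_eq_nsmul ℂ]
    module
  exact smul_right_injective _ two_ne_zero key


variable (hperm : ∀ (σ : Equiv.Perm (Fin d)) (j : Fin d), perm σ (cgen d j) = cgen d (σ j))
  (heps : ∀ i j : Fin d, eps i (cgen d j) = (if j = i then (-1 : ℂ) else 1) • cgen d j)

include hperm heps

lemma T_cI : Tdiag d a perm eps i hi (cgen d ⟨i,hi⟩) =
    (-((a:ℂ)+(i:ℕ))) • cgen d ⟨i,hi⟩ +
      (∑ k : Fin d, if (k:ℕ) < i then cgen d k else 0) := by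
  rw [Tapp, heps, if_pos rfl]
  rw [Finset.sum_congr rfl (g := fun (k : Fin d) =>
      (if (k:ℕ) < i then cgen d k else 0) -
      (if (k:ℕ) < i then cgen d ⟨i,hi⟩ else 0))
    (fun k _ => ?_)]
  · rw [Finset.sum_sub_distrib, sum_ite_lt d i hi.le]
    simp only [← Nat.cast_smul_eq_nsmul ℂ]
    module
  · beta_reduce
    by_cases hk : (k:ℕ) < i
    · rw [if_pos hk, if_pos hk, if_pos hk,
        hperm, Equiv.swap_apply_right, mul_assoc,
        aux_xzx (csq d k) (canti d (fin_ne_of_lt d i hi hk))]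
    · rw [if_neg hk, if_neg hk, if_neg hk, sub_zero]

lemma T_mI (m : Fin d) (hm : (m:ℕ) < i) :
    Tdiag d a perm eps i hi (cgen d m * cgen d ⟨i,hi⟩) =
      (-((a:ℂ)+(i:ℕ))) • (cgen d m * cgen d ⟨i,hi⟩) +
        cgen d m * (∑ k : Fin d, if (k:ℕ) < i then cgen d k else 0) := by
  have hmI : m ≠ ⟨i,hi⟩ := fin_ne_of_lt d i hi hm
  rw [Tapp]
  have he : eps ⟨i,hi⟩ (cgen d m * cgen d ⟨i,hi⟩) = -(cgen d m * cgen d ⟨i,hi⟩) := by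
    rw [map_mul, heps, heps, if_pos rfl, if_neg hmI, one_smul, neg_one_smul, mul_neg]
  rw [he]
  rw [Finset.sum_congr rfl (g := fun (k : Fin d) =>
     ((if (k:ℕ) < i then (cgen d m * cgen d k - cgen d m * cgen d ⟨i,hi⟩) else 0)
      + (if k = m then ((cgen d ⟨i,hi⟩ * cgen d m - 1) -
          (cgen d m * cgen d m - cgen d m * cgen d ⟨i,hi⟩)) else 0)))
     (fun k _ => ?_)]
  · rw [Finset.sum_add_distrib, Fintype.sum_ite_eq' m (fun _ =>
        ((cgen d ⟨i,hi⟩ * cgen d m - 1) -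
          (cgen d m * cgen d m - cgen d m * cgen d ⟨i,hi⟩)))]
    rw [Finset.sum_congr rfl (g := fun (k : Fin d) =>
        (if (k:ℕ) < i then cgen d m * cgen d k else 0) -
        (if (k:ℕ) < i then cgen d m * cgen d ⟨i,hi⟩ else 0))
      (fun k _ => by by_cases hk : (k:ℕ) < i <;> simp [hk])]
    rw [Finset.sum_sub_distrib, sum_ite_lt d i hi.le]
    have hmulsum : (∑ k : Fin d, if (k:ℕ) < i then cgen d m * cgen d k else 0) =
        cgen d m * (∑ k : Fin d, if (k:ℕ) < i then cgen d k else 0) := by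
      rw [Finset.mul_sum]
      exact Finset.sum_congr rfl fun k _ => by rw [mul_ite, mul_zero]
    rw [hmulsum, csq, canti d (Ne.symm hmI)]
    simp only [← Nat.cast_smul_eq_nsmul ℂ]
    module
  · beta_reduce
    by_cases hk : (k:ℕ) < i
    · by_cases hkm : k = m
      · subst hkm
        rw [if_pos hk, if_pos hk, if_pos rfl]
        rw [map_mul, hperm, hperm, Equiv.swap_apply_left, Equiv.swap_apply_right]
        rw [mul_assoc (cgen d k) (cgen d ⟨i,hi⟩)]
        rw [← mul_assoc (cgen d ⟨i,hi⟩) (cgen d ⟨i,hi⟩) (cgen d k), csq,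
          neg_one_mul, mul_neg, csq]
        abel
      · rw [if_pos hk, if_pos hk, if_neg hkm, add_zero]
        rw [map_mul, hperm, hperm, Equiv.swap_apply_right,
          Equiv.swap_apply_of_ne_of_ne (Ne.symm hkm) hmI]
        rw [aux_xyzx (csq d k) (canti d (fin_ne_of_lt d i hi hk))
          (canti d hkm) (canti d (Ne.symm hmI))]
    · have hkm : k ≠ m := fun h => hk (h ▸ hm)
      rw [if_neg hk, if_neg hk, if_neg hkm, add_zero]

lemma T_S : Tdiag d a perm eps i hi
      (∑ k : Fin d, if (k:ℕ) < i then cgen d k * cgen d ⟨i,hi⟩ else 0) =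
    (-((a:ℂ)+(i:ℕ))) • (∑ k : Fin d, if (k:ℕ) < i then cgen d k * cgen d ⟨i,hi⟩ else 0)
      - ((i:ℕ):ℂ) • 1 := by
  rw [map_sum]
  rw [Finset.sum_congr rfl (g := fun (m : Fin d) =>
      ((-((a:ℂ)+(i:ℕ))) • (if (m:ℕ) < i then cgen d m * cgen d ⟨i,hi⟩ else 0)
        + (if (m:ℕ) < i then cgen d m *
            (∑ k : Fin d, if (k:ℕ) < i then cgen d k else 0) else 0)))
    (fun m _ => ?_)]
  · rw [Finset.sum_add_distrib, ← Finset.smul_sum]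
    have hsum2 : (∑ m : Fin d, if (m:ℕ) < i then cgen d m *
        (∑ k : Fin d, if (k:ℕ) < i then cgen d k else 0) else 0) =
        (∑ k : Fin d, if (k:ℕ) < i then cgen d k else 0) *
        (∑ k : Fin d, if (k:ℕ) < i then cgen d k else 0) := by
      rw [Finset.sum_mul]
      exact (Finset.sum_congr rfl fun m _ => by rw [ite_mul, zero_mul]).symm
    rw [hsum2, Sc_sq d i hi.le]
    module
  · beta_reduce
    by_cases hm : (m:ℕ) < i
    · rw [if_pos hm, if_pos hm, T_mI d a perm eps i hi hperm heps m hm]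
    · rw [if_neg hm, if_neg hm, map_zero, smul_zero, add_zero]

omit hperm heps in
lemma Xapp (u v : CliffordAlgebra (Qd d)) :
    Xop d a perm eps i (u, v) =
      (Tdiag d a perm eps i hi u + (a:ℂ) • (cgen d ⟨i,hi⟩ * v),
       Tdiag d a perm eps i hi v - cgen d ⟨i,hi⟩ * u) := by
  rw [Xop, dif_pos hi]
  simp only [LinearMap.add_apply, LinearMap.prodMap_apply, LinearMap.prod_apply, Function.prod,
    LinearMap.coe_comp, Function.comp_apply, LinearMap.smul_apply, LinearMap.neg_apply,
    LinearMap.fst_apply, LinearMap.snd_apply, LinearMap.mulLeft_apply, Prod.mk_add_mk,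
    Prod.map_apply]
  rw [sub_eq_add_neg]

include hi in
theorem segment_xsq_eigenvalue' :
    ∀ v ∈ ({((1 : CliffordAlgebra (Qd d)), (0 : CliffordAlgebra (Qd d))),
            ((0 : CliffordAlgebra (Qd d)), (1 : CliffordAlgebra (Qd d)))} :
              Set (SegSpace d)),
      (Xop d a perm eps i) ((Xop d a perm eps i) v) =
        (((a + i) * (a + i + 1) : ℤ) : ℂ) • v := by
  have hT1 := T_one d a perm eps i hi
  have hTc := T_cI d a perm eps i hi hperm heps
  have hTS := T_S d a perm eps i hi hperm heps
  have hciS' := ciS d i hi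
  have hcsq := csq d ⟨i,hi⟩
  have hTT1 : Tdiag d a perm eps i hi (Tdiag d a perm eps i hi 1) =
      (((a:ℂ)+(i:ℕ))^2 + (i:ℕ)) • 1 := by
    rw [hT1, map_sub, map_smul, hT1, hTS]
    module
  have hcT1 : cgen d ⟨i,hi⟩ * (Tdiag d a perm eps i hi 1) =
      ((a:ℂ)+(i:ℕ)) • cgen d ⟨i,hi⟩ -
        (∑ k : Fin d, if (k:ℕ) < i then cgen d k else 0) := by
    rw [hT1, mul_sub, mul_smul_comm, mul_one, hciS']
  intro v hv
  simp only [Set.mem_insert_iff, Set.mem_singleton_iff] at hv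
  have e1 : Xop d a perm eps i ((1 : CliffordAlgebra (Qd d)), (0 : CliffordAlgebra (Qd d))) =
      (Tdiag d a perm eps i hi 1, -(cgen d ⟨i,hi⟩)) := by
    rw [Xapp d a perm eps i hi, mul_zero, smul_zero, add_zero, map_zero, zero_sub, mul_one]
  have e2 : Xop d a perm eps i ((0 : CliffordAlgebra (Qd d)), (1 : CliffordAlgebra (Qd d))) =
      ((a:ℂ) • cgen d ⟨i,hi⟩, Tdiag d a perm eps i hi 1) := by
    rw [Xapp d a perm eps i hi, mul_one, map_zero, zero_add, mul_zero, sub_zero]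
  rcases hv with rfl | rfl
  · rw [e1, Xapp d a perm eps i hi]
    rw [Prod.smul_mk, smul_zero, Prod.mk.injEq]
    constructor
    · have h1 : cgen d ⟨i,hi⟩ * -(cgen d ⟨i,hi⟩) = 1 := by rw [mul_neg, hcsq, neg_neg]
      rw [h1, hTT1]
      push_cast
      module
    · rw [map_neg, hTc, hcT1]
      module
  · rw [e2, Xapp d a perm eps i hi]
    rw [Prod.smul_mk, smul_zero, Prod.mk.injEq]
    constructor
    · rw [map_smul, hTc, hcT1]
      module
    · rw [mul_smul_comm, hcsq, hTT1]
      push_cast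
      module

end

/-- For the segment module `Φ_a ⊗ Cl_d` attached to a segment `[a, b]` with
`d = b - a + 1`, the action of `x_i²` on `φ^δ ⊗ 𝟏` (`δ ∈ {0,1}`, i.e. on the
vectors `(1, 0)` and `(0, 1)`) is by the scalar `q(a + i - 1)` (in `0`-based
indexing: the `i`-th polynomial generator, `0 ≤ i < d`, acts with eigenvalue
`q(a + i) = (a + i)(a + i + 1)`). -/
theorem segment_xsq_eigenvalue (d : ℕ) (hd : 1 ≤ d) (a b : ℤ) (hab : b - a + 1 = d)
    (perm : Equiv.Perm (Fin d) → (CliffordAlgebra (Qd d) →ₐ[ℂ] CliffordAlgebra (Qd d)))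
    (hperm : ∀ (σ : Equiv.Perm (Fin d)) (j : Fin d), perm σ (cgen d j) = cgen d (σ j))
    (eps : Fin d → (CliffordAlgebra (Qd d) →ₐ[ℂ] CliffordAlgebra (Qd d)))
    (heps : ∀ i j : Fin d, eps i (cgen d j) = (if j = i then (-1 : ℂ) else 1) • cgen d j)
    (i : ℕ) (hi : i < d) :
    ∀ v ∈ ({((1 : CliffordAlgebra (Qd d)), (0 : CliffordAlgebra (Qd d))),
            ((0 : CliffordAlgebra (Qd d)), (1 : CliffordAlgebra (Qd d)))} :
              Set (SegSpace d)),
      (Xop d a perm eps i) ((Xop d a perm eps i) v) =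
        (((a + i) * (a + i + 1) : ℤ) : ℂ) • v := by
  exact segment_xsq_eigenvalue' d a perm eps i hi hperm heps
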